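/- Let 3 ≤ w < n and suppose a Steiner system S(3,w,n) exists. Then the smallest integer q for which an (n, C(n,3)/C(w,3), w, 2w−2)_q code exists equals 1 + min over all Steiner systems S of type S(3,w,n) on an n-element point set of ( max over the n points p of χ(D_p(S)) ), where D_p(S) is the S(2,w−1,n−1) derived from S at p and χ denotes the chromatic number of its minimum-distance graph. -/

import Mathlib

/-- The support of a word over the alphabet `{0, ..., q-1}` (represented as
naturals below `q`): the set of coordinates with nonzero entries. -/
def suppN {n : ℕ} (x : Fin n → ℕ) : Finset (Fin n) :=
  Finset.univ.filter (fun i => x i ≠ 0)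

/-- An `(n, M, w, d)_q` constant-weight code. -/
def IsCWCode (n M w d q : ℕ) (C : Finset (Fin n → ℕ)) : Prop :=
  C.card = M ∧ (∀ x ∈ C, ∀ i, x i < q) ∧ (∀ x ∈ C, (suppN x).card = w) ∧
  ∀ x ∈ C, ∀ y ∈ C, x ≠ y → d ≤ hammingDist x y

/-- A Steiner system `S(t, k, n)` on the point set `Fin n`. -/
def IsSteiner {n : ℕ} (t k : ℕ) (B : Finset (Finset (Fin n))) : Prop :=
  (∀ b ∈ B, b.card = k) ∧
  ∀ s : Finset (Fin n), s.card = t → ∃! b, b ∈ B ∧ s ⊆ b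

/-- The block set of the system derived from `B` at the point `p`. -/
def derivedAt {n : ℕ} (B : Finset (Finset (Fin n))) (p : Fin n) :
    Finset (Finset (Fin n)) :=
  (B.filter (fun b => p ∈ b)).image (fun b => b.erase p)

/-- The minimum-distance graph of (the block set of) an `S(2,k',n')`: blocks
are adjacent iff they intersect in exactly one point. -/
def mdGraph {n : ℕ} (D : Finset (Finset (Fin n))) :
    SimpleGraph {b : Finset (Fin n) // b ∈ D} where
  Adj a b := a ≠ b ∧ (a.val ∩ b.val).card = 1
  symm := ⟨fun a b h => ⟨h.1.symm, by rw [Finset.inter_comm]; exact h.2⟩⟩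
  loopless := ⟨fun a h => h.1 rfl⟩

/-- The chromatic number (as a natural number) of a graph. -/
noncomputable def chromNum {V : Type*} (G : SimpleGraph V) : ℕ :=
  G.chromaticNumber.toNat

open Finset

lemma mem_suppN {n : ℕ} {x : Fin n → ℕ} {i : Fin n} : i ∈ suppN x ↔ x i ≠ 0 := by
  simp [suppN]

lemma hamming_eq {n : ℕ} (x y : Fin n → ℕ) :
    hammingDist x y = (univ.filter fun i => x i ≠ y i).card := rfl

lemma diff_subset_supp {n : ℕ} (x y : Fin n → ℕ) :
    (univ.filter fun i => x i ≠ y i) ⊆ suppN x ∪ suppN y := by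
  intro i hi
  simp only [mem_filter, mem_univ, true_and] at hi
  simp only [mem_union, mem_suppN]
  by_contra h
  push_neg at h
  rw [h.1, h.2] at hi
  exact hi rfl

lemma steiner_inter_le_two {n w : ℕ} {B : Finset (Finset (Fin n))}
    (hB : IsSteiner 3 w B) {b b' : Finset (Fin n)} (hb : b ∈ B) (hb' : b' ∈ B)
    (hne : b ≠ b') : (b ∩ b').card ≤ 2 := by
  by_contra h
  push_neg at h
  obtain ⟨s, hs, hs3⟩ := Finset.exists_subset_card_eq (show 3 ≤ _ from h)
  obtain ⟨u, -, hu⟩ := hB.2 s hs3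
  exact hne ((hu b ⟨hb, hs.trans inter_subset_left⟩).trans
    (hu b' ⟨hb', hs.trans inter_subset_right⟩).symm)

lemma steiner_card_mul {n w : ℕ} {B : Finset (Finset (Fin n))}
    (hB : IsSteiner 3 w B) : B.card * w.choose 3 = n.choose 3 := by
  classical
  have hT : (univ : Finset (Fin n)).powersetCard 3 =
      B.biUnion (fun b => b.powersetCard 3) := by
    ext s
    simp only [mem_powersetCard, mem_biUnion]
    constructor
    · rintro ⟨-, hs3⟩
      obtain ⟨b, ⟨hbB, hsb⟩, -⟩ := hB.2 s hs3
      exact ⟨b, hbB, hsb, hs3⟩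
    · rintro ⟨b, -, -, hs3⟩
      exact ⟨subset_univ s, hs3⟩
  have hdisj : ∀ b ∈ B, ∀ b' ∈ B, b ≠ b' →
      Disjoint (b.powersetCard 3) (b'.powersetCard 3) := by
    intro b hb b' hb' hne
    rw [disjoint_left]
    intro s hs hs'
    rw [mem_powersetCard] at hs hs'
    obtain ⟨u, -, hu⟩ := hB.2 s hs.2
    exact hne ((hu b ⟨hb, hs.1⟩).trans (hu b' ⟨hb', hs'.1⟩).symm)
  have := Finset.card_biUnion hdisj
  rw [← hT, card_powersetCard, card_univ, Fintype.card_fin] at this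
  have h2 : ∑ u ∈ B, (u.powersetCard 3).card = B.card * w.choose 3 := by
    rw [Finset.sum_congr rfl (fun b hb => by rw [card_powersetCard, hB.1 b hb]),
      sum_const, smul_eq_mul]
  omega

lemma hamming_le_union {n : ℕ} (x y : Fin n → ℕ) :
    hammingDist x y ≤ (suppN x ∪ suppN y).card :=
  card_le_card (diff_subset_supp x y)

/-- If weights are `w`, distance ≥ 2w-2, supports meet in exactly 2 points,
then the words differ at each common support point. -/
lemma key_forcing {n w : ℕ} (hw : 3 ≤ w) {x y : Fin n → ℕ}
    (hx : (suppN x).card = w) (hy : (suppN y).card = w)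
    (hs : (suppN x ∩ suppN y).card = 2)
    (hd : 2 * w - 2 ≤ hammingDist x y) {p : Fin n}
    (hp : p ∈ suppN x ∩ suppN y) : x p ≠ y p := by
  intro heq
  have hsub : (univ.filter fun i => x i ≠ y i) ⊆ (suppN x ∪ suppN y).erase p := by
    intro i hi
    simp only [mem_filter, mem_univ, true_and] at hi
    rw [mem_erase]
    refine ⟨fun h => hi (h ▸ heq), diff_subset_supp x y ?_⟩
    simp only [mem_filter, mem_univ, true_and]; exact hi
  have h1 := card_le_card hsub
  rw [card_erase_of_mem (mem_union_left _ (mem_of_mem_inter_left hp))] at h1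
  have h2 := card_union_add_card_inter (suppN x) (suppN y)
  rw [hx, hy, hs] at h2
  rw [hamming_eq] at hd
  omega

lemma mem_derivedAt' {n : ℕ} {B : Finset (Finset (Fin n))} {p : Fin n}
    {β : Finset (Fin n)} :
    β ∈ (B.filter (fun b => p ∈ b)).image (fun b => b.erase p) ↔
      p ∉ β ∧ insert p β ∈ B := by
  simp only [mem_image, mem_filter]
  constructor
  · rintro ⟨b, ⟨hb, hpb⟩, rfl⟩
    exact ⟨notMem_erase p b, by rwa [insert_erase hpb]⟩
  · rintro ⟨hpβ, hins⟩
    exact ⟨insert p β, ⟨hins, mem_insert_self p β⟩, by rw [erase_insert hpβ]⟩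

/-- Supports of codewords of a max-size code form a Steiner system. -/
lemma code_supp_facts {n w : ℕ} (hw : 3 ≤ w) {C : Finset (Fin n → ℕ)}
    (hwt : ∀ x ∈ C, (suppN x).card = w)
    (hd : ∀ x ∈ C, ∀ y ∈ C, x ≠ y → 2 * w - 2 ≤ hammingDist x y) :
    Set.InjOn suppN (C : Set (Fin n → ℕ)) ∧
    (∀ x ∈ C, ∀ y ∈ C, x ≠ y → (suppN x ∩ suppN y).card ≤ 2) := by
  have key : ∀ x ∈ C, ∀ y ∈ C, x ≠ y → (suppN x ∩ suppN y).card ≤ 2 := by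
    intro x hx y hy hne
    have h1 := hamming_le_union x y
    have h2 := card_union_add_card_inter (suppN x) (suppN y)
    have h3 := hd x hx y hy hne
    have h4 := hwt x hx
    have h5 := hwt y hy
    omega
  refine ⟨?_, key⟩
  intro x hx y hy hsupp
  by_contra hne
  have h1 := hamming_le_union x y
  rw [hsupp, union_self] at h1
  have h3 := hd x hx y hy hne
  have h5 := hwt y hy
  omega

lemma code_supp_steiner {n w : ℕ} (hw : 3 ≤ w) {C : Finset (Fin n → ℕ)}
    (hchoose : C.card * w.choose 3 = n.choose 3)
    (hwt : ∀ x ∈ C, (suppN x).card = w)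
    (hd : ∀ x ∈ C, ∀ y ∈ C, x ≠ y → 2 * w - 2 ≤ hammingDist x y) :
    IsSteiner 3 w (C.image suppN) := by
  classical
  obtain ⟨hinj, hint⟩ := code_supp_facts hw hwt hd
  have hBcard : (C.image suppN).card = C.card := card_image_of_injOn hinj
  have hint' : ∀ b ∈ C.image suppN, ∀ b' ∈ C.image suppN, b ≠ b' →
      (b ∩ b').card ≤ 2 := by
    intro b hb b' hb' hne
    obtain ⟨x, hx, rfl⟩ := mem_image.mp hb
    obtain ⟨y, hy, rfl⟩ := mem_image.mp hb'
    exact hint x hx y hy (fun h => hne (h ▸ rfl))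
  have hcards : ∀ b ∈ C.image suppN, b.card = w := by
    intro b hb; obtain ⟨x, hx, rfl⟩ := mem_image.mp hb; exact hwt x hx
  -- uniqueness of blocks through a triple
  have huniq : ∀ s : Finset (Fin n), s.card = 3 → ∀ b ∈ C.image suppN,
      ∀ b' ∈ C.image suppN, s ⊆ b → s ⊆ b' → b = b' := by
    intro s hs3 b hb b' hb' hsb hsb'
    by_contra hne
    have := hint' b hb b' hb' hne
    have : s ⊆ b ∩ b' := subset_inter hsb hsb'
    have := card_le_card this
    omega
  -- the union of all triples inside blocks is everything
  have hdisj : ∀ b ∈ C.image suppN, ∀ b' ∈ C.image suppN, b ≠ b' →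
      Disjoint (b.powersetCard 3) (b'.powersetCard 3) := by
    intro b hb b' hb' hne
    rw [disjoint_left]
    intro s hs hs'
    rw [mem_powersetCard] at hs hs'
    exact hne (huniq s hs.2 b hb b' hb' hs.1 hs'.1)
  have hcardU := Finset.card_biUnion hdisj
  have h2 : ∑ u ∈ C.image suppN, (u.powersetCard 3).card = C.card * w.choose 3 := by
    rw [Finset.sum_congr rfl (fun b hb => by rw [card_powersetCard, hcards b hb]),
      sum_const, smul_eq_mul, hBcard]
  have hsubU : (C.image suppN).biUnion (fun b => b.powersetCard 3) ⊆
      (univ : Finset (Fin n)).powersetCard 3 := by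
    intro s hs
    rw [mem_biUnion] at hs
    obtain ⟨b, -, hsb⟩ := hs
    rw [mem_powersetCard] at hsb ⊢
    exact ⟨subset_univ s, hsb.2⟩
  have hTcard : ((univ : Finset (Fin n)).powersetCard 3).card = n.choose 3 := by
    rw [card_powersetCard, card_univ, Fintype.card_fin]
  have hUeq : (C.image suppN).biUnion (fun b => b.powersetCard 3) =
      (univ : Finset (Fin n)).powersetCard 3 := by
    apply Finset.eq_of_subset_of_card_le hsubU
    rw [hTcard, hcardU, h2, hchoose]
  constructor
  · exact hcards
  · intro s hs3
    have hsT : s ∈ (univ : Finset (Fin n)).powersetCard 3 := by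
      rw [mem_powersetCard]; exact ⟨subset_univ s, hs3⟩
    rw [← hUeq, mem_biUnion] at hsT
    obtain ⟨b, hb, hsb⟩ := hsT
    rw [mem_powersetCard] at hsb
    refine ⟨b, ⟨hb, hsb.1⟩, ?_⟩
    rintro b' ⟨hb', hsb'⟩
    exact huniq s hs3 b' hb' b hb hsb' hsb.1

lemma mem_derivedAt {n : ℕ} {B : Finset (Finset (Fin n))} {p : Fin n}
    {β : Finset (Fin n)} :
    β ∈ derivedAt B p ↔ p ∉ β ∧ insert p β ∈ B := mem_derivedAt'

/-- Lower bound: any code of the right parameters yields a Steiner system all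
of whose derived min-distance graphs are `(q-1)`-colorable. -/
lemma lower_bound {n w q : ℕ} (hw : 3 ≤ w) (hwn : w < n)
    (hchoose : (n.choose 3 / w.choose 3) * w.choose 3 = n.choose 3)
    {C : Finset (Fin n → ℕ)}
    (hC : IsCWCode n (n.choose 3 / w.choose 3) w (2 * w - 2) q C) :
    ∃ B : Finset (Finset (Fin n)), IsSteiner 3 w B ∧
      (Finset.univ.sup (fun p : Fin n => chromNum (mdGraph (derivedAt B p)))) + 1 ≤ q := by
  classical
  obtain ⟨hcard, hlt, hwt, hd⟩ := hC
  obtain ⟨hinj, hint⟩ := code_supp_facts hw hwt hd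
  set B := C.image suppN with hBdef
  have hB : IsSteiner 3 w B := code_supp_steiner hw (by rw [hcard, hchoose]) hwt hd
  refine ⟨B, hB, ?_⟩
  -- q ≥ 1 : there is a block, hence a codeword with nonzero entry
  have hn3 : 0 < n.choose 3 := Nat.choose_pos (by omega)
  have hCne : C.Nonempty := by
    rw [← card_pos, hcard]
    exact Nat.div_pos (Nat.le_of_dvd hn3 ⟨_, hchoose.symm.trans (mul_comm _ _)⟩ |>.trans
      (le_refl _)) (Nat.choose_pos hw) |>.trans_le (le_refl _)
  have hq1 : 1 ≤ q := by
    obtain ⟨x, hx⟩ := hCne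
    have := hwt x hx
    have hne : (suppN x).Nonempty := by rw [← card_pos, this]; omega
    obtain ⟨i, hi⟩ := hne
    have := hlt x hx i
    rw [mem_suppN] at hi
    omega
  -- each derived min-distance graph is (q-1)-colorable
  have hcolor : ∀ p : Fin n, (mdGraph (derivedAt B p)).Colorable (q - 1) := by
    intro p
    -- choose the codeword for each block
    have hxof : ∀ β ∈ derivedAt B p, ∃ x, x ∈ C ∧ suppN x = insert p β := by
      intro β hβ
      rw [mem_derivedAt] at hβ
      obtain ⟨x, hx, hsx⟩ := mem_image.mp hβ.2
      exact ⟨x, hx, hsx⟩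
    choose xof hxofC hxofS using hxof
    have hval : ∀ (β) (hβ : β ∈ derivedAt B p), xof β hβ p ≠ 0 ∧ xof β hβ p < q := by
      intro β hβ
      refine ⟨?_, hlt _ (hxofC β hβ) p⟩
      have : p ∈ suppN (xof β hβ) := by rw [hxofS]; exact mem_insert_self p β
      rwa [mem_suppN] at this
    refine ⟨⟨fun v => ⟨xof v.1 v.2 p - 1, ?_⟩, ?_⟩⟩
    · have := hval v.1 v.2
      omega
    · rintro v v' ⟨hvne, hcut⟩ heq
      simp only [Fin.mk.injEq] at heq
      have hxC := hxofC v.1 v.2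
      have hyC := hxofC v'.1 v'.2
      have hxS := hxofS v.1 v.2
      have hyS := hxofS v'.1 v'.2
      have hv := v.2
      have hv' := v'.2
      rw [mem_derivedAt] at hv hv'
      have hxyne : xof v.1 v.2 ≠ xof v'.1 v'.2 := by
        intro h
        apply hvne
        have hins : insert p v.1 = insert p v'.1 := by
          rw [← hxS, ← hyS]; exact congrArg suppN h
        apply Subtype.ext
        rw [← erase_insert hv.1, ← erase_insert hv'.1, hins]
      have hinter : suppN (xof v.1 v.2) ∩ suppN (xof v'.1 v'.2) =
          insert p (v.1 ∩ v'.1) := by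
        rw [hxS, hyS, insert_inter_distrib]
      have hs2 : (suppN (xof v.1 v.2) ∩ suppN (xof v'.1 v'.2)).card = 2 := by
        rw [hinter, card_insert_of_notMem (fun hp => hv.1 (mem_of_mem_inter_left hp)),
          hcut]
      have hpmem : p ∈ suppN (xof v.1 v.2) ∩ suppN (xof v'.1 v'.2) := by
        rw [hinter]; exact mem_insert_self _ _
      have hforce := key_forcing hw (hwt _ hxC) (hwt _ hyC) hs2
        (hd _ hxC _ hyC hxyne) hpmem
      have h1 := hval v.1 v.2
      have h2 := hval v'.1 v'.2
      exact hforce (by omega)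
  -- conclude the sup bound
  have hsup : (Finset.univ.sup
      (fun p : Fin n => chromNum (mdGraph (derivedAt B p)))) ≤ q - 1 := by
    apply Finset.sup_le
    intro p _
    have := (hcolor p).chromaticNumber_le
    unfold chromNum
    exact ENat.toNat_le_of_le_coe (by exact_mod_cast this)
  omega

lemma construct {n w m : ℕ} (hw : 3 ≤ w)
    {B : Finset (Finset (Fin n))} (hB : IsSteiner 3 w B)
    (hcol : ∀ p : Fin n, chromNum (mdGraph (derivedAt B p)) ≤ m) :
    ∃ C : Finset (Fin n → ℕ),
      IsCWCode n (n.choose 3 / w.choose 3) w (2 * w - 2) (m + 1) C := by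
  classical
  have hcolorable : ∀ p : Fin n, (mdGraph (derivedAt B p)).Colorable m :=
    fun p => ((mdGraph (derivedAt B p)).colorable_chromaticNumber_of_fintype).mono (hcol p)
  have col : ∀ p : Fin n, (mdGraph (derivedAt B p)).Coloring (Fin m) :=
    fun p => (hcolorable p).some
  have hmem : ∀ {b : Finset (Fin n)} {i : Fin n}, b ∈ B → i ∈ b →
      b.erase i ∈ derivedAt B i := by
    intro b i hb hi
    exact mem_derivedAt.mpr ⟨notMem_erase i b, by rwa [insert_erase hi]⟩
  set f : Finset (Fin n) → Fin n → ℕ := fun b i =>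
    if h : b ∈ B ∧ i ∈ b then (col i ⟨b.erase i, hmem h.1 h.2⟩).val + 1 else 0
    with hfdef
  have hsupp : ∀ b ∈ B, suppN (f b) = b := by
    intro b hb
    ext i
    rw [mem_suppN]
    by_cases h : i ∈ b
    · simp only [hfdef, dif_pos (⟨hb, h⟩ : b ∈ B ∧ i ∈ b)]
      exact iff_of_true (Nat.succ_ne_zero _) h
    · simp only [hfdef, dif_neg (fun hc : b ∈ B ∧ i ∈ b => h hc.2)]
      exact iff_of_false (fun hc => hc rfl) h
  have hinj : Set.InjOn f (B : Set (Finset (Fin n))) := by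
    intro b hb b' hb' heq
    rw [← hsupp b hb, ← hsupp b' hb', heq]
  -- values differ at common points of two distinct blocks meeting in 2 points
  have hdiffer : ∀ b ∈ B, ∀ b' ∈ B, b ≠ b' → (b ∩ b').card = 2 →
      ∀ p ∈ b ∩ b', f b p ≠ f b' p := by
    intro b hb b' hb' hne hs2 p hp
    have hpb : p ∈ b := mem_of_mem_inter_left hp
    have hpb' : p ∈ b' := mem_of_mem_inter_right hp
    have hadj : (mdGraph (derivedAt B p)).Adj
        ⟨b.erase p, hmem hb hpb⟩ ⟨b'.erase p, hmem hb' hpb'⟩ := by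
      constructor
      · intro hc
        apply hne
        have h3 : b.erase p = b'.erase p := congrArg Subtype.val hc
        rw [← insert_erase hpb, ← insert_erase hpb', h3]
      · show (b.erase p ∩ b'.erase p).card = 1
        have : b.erase p ∩ b'.erase p = (b ∩ b').erase p := by
          ext a; simp only [mem_inter, mem_erase]; tauto
        rw [this, card_erase_of_mem hp, hs2]
    have hcne := (col p).valid hadj
    simp only [hfdef, dif_pos (⟨hb, hpb⟩ : b ∈ B ∧ p ∈ b),
      dif_pos (⟨hb', hpb'⟩ : b' ∈ B ∧ p ∈ b')]
    intro hc
    exact hcne (Fin.val_injective (Nat.succ_injective hc))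
  refine ⟨B.image f, ?_, ?_, ?_, ?_⟩
  · rw [card_image_of_injOn hinj]
    have := steiner_card_mul hB
    have hpos : 0 < w.choose 3 := Nat.choose_pos hw
    rw [← this, Nat.mul_div_cancel _ hpos]
  · intro x hx i
    obtain ⟨b, hb, rfl⟩ := mem_image.mp hx
    by_cases h : b ∈ B ∧ i ∈ b
    · simp only [hfdef, dif_pos h]
      have := (col i ⟨b.erase i, hmem h.1 h.2⟩).isLt
      omega
    · simp only [hfdef, dif_neg h]; omega
  · intro x hx
    obtain ⟨b, hb, rfl⟩ := mem_image.mp hx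
    rw [hsupp b hb]
    exact hB.1 b hb
  · intro x hx y hy hne
    obtain ⟨b, hb, rfl⟩ := mem_image.mp hx
    obtain ⟨b', hb', rfl⟩ := mem_image.mp hy
    have hbne : b ≠ b' := fun h => hne (h ▸ rfl)
    have hs := steiner_inter_le_two hB hb hb' hbne
    have hwb := hB.1 b hb
    have hwb' := hB.1 b' hb'
    have hsd : (b \ b') ∪ (b' \ b) ⊆ univ.filter fun i => f b i ≠ f b' i := by
      intro i hi
      simp only [mem_filter, mem_univ, true_and]
      rcases mem_union.mp hi with h | h
      · rw [mem_sdiff] at h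
        simp only [hfdef, dif_pos (⟨hb, h.1⟩ : b ∈ B ∧ i ∈ b),
          dif_neg (fun hc : b' ∈ B ∧ i ∈ b' => h.2 hc.2)]
        exact Nat.succ_ne_zero _
      · rw [mem_sdiff] at h
        simp only [hfdef, dif_neg (fun hc : b ∈ B ∧ i ∈ b => h.2 hc.2),
          dif_pos (⟨hb', h.1⟩ : b' ∈ B ∧ i ∈ b')]
        exact (Nat.succ_ne_zero _).symm
    rw [hamming_eq]
    by_cases h2 : (b ∩ b').card = 2
    · have hsub : b ∪ b' ⊆ univ.filter fun i => f b i ≠ f b' i := by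
        intro i hi
        by_cases hib : i ∈ b ∩ b'
        · simp only [mem_filter, mem_univ, true_and]
          exact hdiffer b hb b' hb' hbne h2 i hib
        · apply hsd
          rw [mem_inter] at hib
          rcases mem_union.mp hi with h | h
          · exact mem_union_left _ (mem_sdiff.mpr ⟨h, fun hc => hib ⟨h, hc⟩⟩)
          · exact mem_union_right _ (mem_sdiff.mpr ⟨h, fun hc => hib ⟨hc, h⟩⟩)
      have hle := card_le_card hsub
      have hcu := card_union_add_card_inter b b'
      omega
    · have hle := card_le_card hsd
      have hdisj : Disjoint (b \ b') (b' \ b) := disjoint_sdiff_sdiff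
      rw [card_union_of_disjoint hdisj] at hle
      have e1 := card_sdiff_add_card_inter b b'
      have e2 := card_sdiff_add_card_inter b' b
      rw [inter_comm] at e2
      omega


theorem stmt_10 (n w : ℕ) (hw : 3 ≤ w) (hwn : w < n)
    (B0 : Finset (Finset (Fin n))) (hB0 : IsSteiner 3 w B0) :
    IsLeast {q : ℕ | ∃ C : Finset (Fin n → ℕ),
        IsCWCode n (Nat.choose n 3 / Nat.choose w 3) w (2 * w - 2) q C}
      (sInf {m : ℕ | ∃ B : Finset (Finset (Fin n)), IsSteiner 3 w B ∧
          m = Finset.univ.sup (fun p : Fin n => chromNum (mdGraph (derivedAt B p)))}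
        + 1) := by
  classical
  set S := {m : ℕ | ∃ B : Finset (Finset (Fin n)), IsSteiner 3 w B ∧
      m = Finset.univ.sup (fun p : Fin n => chromNum (mdGraph (derivedAt B p)))}
    with hSdef
  have hSne : S.Nonempty := ⟨_, B0, hB0, rfl⟩
  have hchoose : (n.choose 3 / w.choose 3) * w.choose 3 = n.choose 3 := by
    have h0 := steiner_card_mul hB0
    have hpos : 0 < w.choose 3 := Nat.choose_pos hw
    rw [← h0, Nat.mul_div_cancel _ hpos]
  constructor
  · obtain ⟨B, hB, hmeq⟩ := Nat.sInf_mem hSne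
    obtain ⟨C, hC⟩ := construct hw hB
      (fun p => hmeq ▸ Finset.le_sup (Finset.mem_univ p))
    exact ⟨C, hC⟩
  · intro q hq
    obtain ⟨C, hC⟩ := hq
    obtain ⟨B, hB, hle⟩ := lower_bound hw hwn hchoose hC
    have hsle : sInf S ≤ Finset.univ.sup
        (fun p : Fin n => chromNum (mdGraph (derivedAt B p))) :=
      Nat.sInf_le ⟨B, hB, rfl⟩
    omega
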